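/- Let A be the circle with center (a, b), b ≥ 0, and radius r > 0, parameterized by α(t) = (a + r cos(t/r), b + r sin(t/r)), and define G̃(t) = F̃(t) − R̃(t) where F̃(t) = a − b cot(t/r) and R̃(t) = (b + r sin(t/r))/sin(t/r). Then for t with sin(t/r) > 0, G̃'(t) = (b/r) csc²(t/r)(1 + cos(t/r)) ≥ 0. If instead b ≤ 0 (so −b/r ≥ 0 after reversing orientation appropriately), then G̃'(t) ≤ 0 when b ≤ 0. -/

import Mathlib

open Real

/-- With `F̃(t) = a - b cot(t/r)`, `R̃(t) = (b + r sin(t/r))/sin(t/r)` and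
`G̃ = F̃ - R̃` along the circle `α(t) = (a + r cos(t/r), b + r sin(t/r))`,
for `sin(t/r) > 0` one has `G̃'(t) = (b/r) csc²(t/r)(1 + cos(t/r))`, which is
`≥ 0` when `b ≥ 0` and `≤ 0` when `b ≤ 0`. -/
theorem stmt_6 (a b r t : ℝ) (hr : 0 < r) (hs : 0 < sin (t/r)) :
    HasDerivAt
      (fun u => (a - b * (cos (u/r) / sin (u/r))) - (b + r * sin (u/r)) / sin (u/r))
      ((b/r) * (1 / sin (t/r)^2) * (1 + cos (t/r))) t ∧
    (0 ≤ b → 0 ≤ (b/r) * (1 / sin (t/r)^2) * (1 + cos (t/r))) ∧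
    (b ≤ 0 → (b/r) * (1 / sin (t/r)^2) * (1 + cos (t/r)) ≤ 0) := by
  have hx : sin (t/r) ≠ 0 := ne_of_gt hs
  have h1 : HasDerivAt (fun u : ℝ => u / r) (1 / r) t := by
    simpa using (hasDerivAt_id t).div_const r
  have hcos : HasDerivAt (fun u : ℝ => cos (u/r)) (-sin (t/r) * (1/r)) t :=
    ((Real.hasDerivAt_cos (t/r)).comp t h1 :)
  have hsin : HasDerivAt (fun u : ℝ => sin (u/r)) (cos (t/r) * (1/r)) t :=
    ((Real.hasDerivAt_sin (t/r)).comp t h1 :)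
  have hcot : HasDerivAt (fun u : ℝ => cos (u/r) / sin (u/r))
      (((-sin (t/r) * (1/r)) * sin (t/r) - cos (t/r) * (cos (t/r) * (1/r))) / sin (t/r)^2) t :=
    hcos.div hsin hx
  have hnum : HasDerivAt (fun u : ℝ => b + r * sin (u/r)) (r * (cos (t/r) * (1/r))) t :=
    (hsin.const_mul r).const_add b
  have hR : HasDerivAt (fun u : ℝ => (b + r * sin (u/r)) / sin (u/r))
      ((r * (cos (t/r) * (1/r)) * sin (t/r) - (b + r * sin (t/r)) * (cos (t/r) * (1/r))) / sin (t/r)^2) t :=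
    hnum.div hsin hx
  have hG := ((hcot.const_mul b).const_sub a).sub hR
  have hd : HasDerivAt
      (fun u => (a - b * (cos (u/r) / sin (u/r))) - (b + r * sin (u/r)) / sin (u/r))
      ((b/r) * (1 / sin (t/r)^2) * (1 + cos (t/r))) t := by
    refine HasDerivAt.congr_deriv hG ?_
    symm
    have hc2 : sin (t/r)^2 + cos (t/r)^2 = 1 := sin_sq_add_cos_sq (t/r)
    have hr0 : r ≠ 0 := hr.ne'
    field_simp
    linear_combination (-b) * hc2
  refine ⟨hd, ?_, ?_⟩
  · intro hb
    have h1 : (0:ℝ) ≤ b / r := div_nonneg hb hr.le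
    have h2 : (0:ℝ) ≤ 1 / sin (t/r)^2 := by positivity
    have h3 : (0:ℝ) ≤ 1 + cos (t/r) := by nlinarith [neg_one_le_cos (t/r)]
    positivity
  · intro hb
    have h1 : b / r ≤ 0 := div_nonpos_of_nonpos_of_nonneg hb hr.le
    have h2 : (0:ℝ) ≤ 1 / sin (t/r)^2 := by positivity
    have h3 : (0:ℝ) ≤ 1 + cos (t/r) := by nlinarith [neg_one_le_cos (t/r)]
    exact mul_nonpos_of_nonpos_of_nonneg (mul_nonpos_of_nonpos_of_nonneg h1 h2) h3
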